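/- arXiv:1810.11371 — 2 statements merged into one kernel-verified Lean document; each statement's English description precedes it below -/
import Mathlib

section
/- Let q : [0, ∞) → ℝ be continuously differentiable with q(0) = 0, and let τ* > 0 be such that q'(t) > 0 for t ∈ [0, τ*) and |q'(τ* - δ)| > |q'(τ* + δ)| for all δ ∈ (0, τ*]. Then q(2τ*) > 0. -/
theorem q_positive_at_twice_critical_time (q q' : ℝ → ℝ) (τs : ℝ)
    (hτs : 0 < τs)
    (hderiv : ∀ t ∈ Set.Ici (0 : ℝ), HasDerivWithinAt q (q' t) (Set.Ici 0) t)
    (hcont : ContinuousOn q' (Set.Ici 0))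
    (hq0 : q 0 = 0)
    (hpos : ∀ t ∈ Set.Ico (0 : ℝ) τs, 0 < q' t)
    (hcmp : ∀ δ ∈ Set.Ioc (0 : ℝ) τs, |q' (τs - δ)| > |q' (τs + δ)|) :
    0 < q (2 * τs) := by
  have h2 : (0:ℝ) ≤ 2 * τs := by linarith
  have hsub : Set.Icc (0:ℝ) (2*τs) ⊆ Set.Ici 0 := fun x hx => hx.1
  have hcontq : ContinuousOn q (Set.Icc 0 (2*τs)) := fun t ht =>
    ((hderiv t ht.1).continuousWithinAt).mono hsub
  have hint : IntervalIntegrable q' MeasureTheory.volume 0 (2*τs) :=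
    (hcont.mono (by rw [Set.uIcc_of_le h2]; exact hsub)).intervalIntegrable
  have hftc : ∫ t in (0:ℝ)..(2*τs), q' t = q (2*τs) - q 0 :=
    intervalIntegral.integral_eq_sub_of_hasDeriv_right_of_le h2 hcontq
      (fun t ht => (hderiv t ht.1.le).mono (fun x hx => le_trans ht.1.le hx.le)) hint
  -- continuity of the composed integrands on [0, τs]
  have hc1 : ContinuousOn (fun δ => q' (τs - δ)) (Set.Icc (0:ℝ) τs) := by
    apply hcont.comp (by fun_prop)
    intro x hx
    simp only [Set.mem_Ici]
    linarith [hx.2]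
  have hc2 : ContinuousOn (fun δ => q' (τs + δ)) (Set.Icc (0:ℝ) τs) := by
    apply hcont.comp (by fun_prop)
    intro x hx
    simp only [Set.mem_Ici]
    linarith [hx.1]
  have hi1 : IntervalIntegrable (fun δ => q' (τs - δ)) MeasureTheory.volume 0 τs :=
    (hc1.mono (by rw [Set.uIcc_of_le hτs.le])).intervalIntegrable
  have hi2 : IntervalIntegrable (fun δ => q' (τs + δ)) MeasureTheory.volume 0 τs :=
    (hc2.mono (by rw [Set.uIcc_of_le hτs.le])).intervalIntegrable
  -- positivity of the sum integral
  have key : (0:ℝ) < ∫ δ in (0:ℝ)..τs, (q' (τs - δ) + q' (τs + δ)) := by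
    apply intervalIntegral.intervalIntegral_pos_of_pos_on (hi1.add hi2)
    · intro x hx
      have h1 : 0 < q' (τs - x) := hpos _ ⟨by linarith [hx.2], by linarith [hx.1]⟩
      have h2 : |q' (τs - x)| > |q' (τs + x)| := hcmp x ⟨hx.1, hx.2.le⟩
      rw [abs_of_pos h1] at h2
      have := neg_abs_le (q' (τs + x))
      linarith
    · exact hτs
  have e1 : ∫ δ in (0:ℝ)..τs, q' (τs - δ) = ∫ t in (0:ℝ)..τs, q' t := by
    simpa using intervalIntegral.integral_comp_sub_left (a := 0) (b := τs) q' τs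
  have e2 : ∫ δ in (0:ℝ)..τs, q' (τs + δ) = ∫ t in τs..(2*τs), q' t := by
    have := intervalIntegral.integral_comp_add_left (a := 0) (b := τs) q' τs
    simpa [two_mul] using this
  have esplit : (∫ t in (0:ℝ)..τs, q' t) + ∫ t in τs..(2*τs), q' t
      = ∫ t in (0:ℝ)..(2*τs), q' t := by
    apply intervalIntegral.integral_add_adjacent_intervals
    · exact hint.mono_set (by rw [Set.uIcc_of_le hτs.le, Set.uIcc_of_le h2]; exact Set.Icc_subset_Icc le_rfl (by linarith))
    · exact hint.mono_set (by rw [Set.uIcc_of_le (by linarith : τs ≤ 2*τs), Set.uIcc_of_le h2]; exact Set.Icc_subset_Icc hτs.le le_rfl)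
  rw [intervalIntegral.integral_add hi1 hi2, e1, e2, esplit, hftc, hq0] at key
  linarith
end

section
/- Let σ, ω, ν₀ > 0 and μ₁ > 0, and suppose t > 0 is the smallest positive solution of ν₀·cos(ωt) + μ₁·sin(ωt) = ν₀·e^{σt}. Then t < π/ω - (1/ω)·arcsin(ν₀/√(ν₀² + μ₁²)) < π/ω. -/
set_option maxHeartbeats 1000000 in
theorem first_exit_time_bound (σ ω ν₀ μ₁ t : ℝ)
    (hσ : 0 < σ) (hω : 0 < ω) (hν : 0 < ν₀) (hμ : 0 < μ₁)
    (ht : 0 < t)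
    (heq : ν₀ * Real.cos (ω * t) + μ₁ * Real.sin (ω * t) = ν₀ * Real.exp (σ * t))
    (hmin : ∀ s ∈ Set.Ioo (0 : ℝ) t,
      ν₀ * Real.cos (ω * s) + μ₁ * Real.sin (ω * s) ≠ ν₀ * Real.exp (σ * s)) :
    t < Real.pi / ω - Real.arcsin (ν₀ / Real.sqrt (ν₀^2 + μ₁^2)) / ω ∧
    Real.pi / ω - Real.arcsin (ν₀ / Real.sqrt (ν₀^2 + μ₁^2)) / ω < Real.pi / ω := by
  set R := Real.sqrt (ν₀^2 + μ₁^2) with hRdef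
  have hR2 : R^2 = ν₀^2 + μ₁^2 := Real.sq_sqrt (by positivity)
  have hRpos : 0 < R := Real.sqrt_pos.mpr (by positivity)
  have hνR : ν₀ < R := by nlinarith
  have hratio1 : ν₀ / R < 1 := (div_lt_one hRpos).mpr hνR
  have hratio0 : 0 < ν₀ / R := div_pos hν hRpos
  set φ := Real.arcsin (ν₀ / R) with hφdef
  have hsinφ : Real.sin φ = ν₀ / R := Real.sin_arcsin (by linarith) hratio1.le
  have hφpos : 0 < φ := Real.arcsin_pos.mpr hratio0
  have hφlt : φ < Real.pi / 2 := Real.arcsin_lt_pi_div_two.mpr hratio1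
  have hcosφ : Real.cos φ = μ₁ / R := by
    rw [hφdef, Real.cos_arcsin]
    rw [show 1 - (ν₀ / R)^2 = (μ₁ / R)^2 by field_simp; nlinarith]
    exact Real.sqrt_sq (by positivity)
  have hid : ∀ x : ℝ, ν₀ * Real.cos x + μ₁ * Real.sin x = R * Real.sin (x + φ) := by
    intro x
    rw [Real.sin_add, hsinφ, hcosφ]
    field_simp
    ring
  have heq' : R * Real.sin (ω * t + φ) = ν₀ * Real.exp (σ * t) := by
    rw [← hid]; exact heq
  have hexpt : 0 < Real.exp (σ * t) := Real.exp_pos _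
  have hsin_pos : 0 < Real.sin (ω * t + φ) := by
    by_contra h
    push_neg at h
    nlinarith
  have hsin_le : Real.sin (ω * t + φ) ≤ 1 := Real.sin_le_one _
  have hRge : ν₀ * Real.exp (σ * t) ≤ R := by nlinarith
  constructor
  · by_contra h
    push_neg at h
    -- h : π/ω - φ/ω ≤ t
    have hge : Real.pi - φ ≤ ω * t := by
      rw [div_sub_div_same] at h
      · nlinarith [(div_le_iff₀ hω).mp h]
    have hne : ω * t + φ ≠ Real.pi := by
      intro hp
      have : Real.sin (ω * t + φ) = 0 := by rw [hp]; exact Real.sin_pi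
      linarith
    have hgt : Real.pi < ω * t + φ := lt_of_le_of_ne (by linarith) (Ne.symm hne)
    set s₁ := (Real.pi / 2 - φ) / ω with hs₁def
    set s₂ := (Real.pi - φ) / ω with hs₂def
    have hπ : 0 < Real.pi := Real.pi_pos
    have hs₁pos : 0 < s₁ := div_pos (by linarith) hω
    have hs₁s₂ : s₁ < s₂ := by
      show (Real.pi / 2 - φ) / ω < (Real.pi - φ) / ω
      gcongr
      linarith
    have hs₂t : s₂ < t := by
      rw [hs₂def, div_lt_iff₀ hω]
      nlinarith
    have hωs₁ : ω * s₁ = Real.pi / 2 - φ := by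
      rw [hs₁def]; field_simp
    have hωs₂ : ω * s₂ = Real.pi - φ := by
      rw [hs₂def]; field_simp
    have hfs₁ : ν₀ * Real.cos (ω * s₁) + μ₁ * Real.sin (ω * s₁) = R := by
      rw [hid, hωs₁, sub_add_cancel, Real.sin_pi_div_two, mul_one]
    have hfs₂ : ν₀ * Real.cos (ω * s₂) + μ₁ * Real.sin (ω * s₂) = 0 := by
      rw [hid, hωs₂, sub_add_cancel, Real.sin_pi, mul_zero]
    have hexp_lt : Real.exp (σ * s₁) < Real.exp (σ * t) :=
      Real.exp_lt_exp.mpr ((mul_lt_mul_iff_right₀ hσ).mpr (lt_trans hs₁s₂ hs₂t))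
    set g : ℝ → ℝ := fun s => ν₀ * Real.cos (ω * s) + μ₁ * Real.sin (ω * s) - ν₀ * Real.exp (σ * s) with hgdef
    have hg₁ : 0 < g s₁ := by
      simp only [hgdef, hfs₁]
      have := mul_lt_mul_of_pos_left hexp_lt hν
      linarith
    have hg₂ : g s₂ < 0 := by
      simp only [hgdef, hfs₂]
      have := mul_pos hν (Real.exp_pos (σ * s₂))
      linarith
    have hcont : ContinuousOn g (Set.Icc s₁ s₂) := by
      apply Continuous.continuousOn
      fun_prop
    have hsub := intermediate_value_Ioo' hs₁s₂.le hcont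
    have hmem : (0 : ℝ) ∈ Set.Ioo (g s₂) (g s₁) := ⟨hg₂, hg₁⟩
    obtain ⟨c, hc, hgc⟩ := hsub hmem
    have : ν₀ * Real.cos (ω * c) + μ₁ * Real.sin (ω * c) = ν₀ * Real.exp (σ * c) := by
      have := hgc
      simp only [hgdef] at this
      linarith
    exact hmin c ⟨lt_trans hs₁pos hc.1, lt_trans hc.2 hs₂t⟩ this
  · have : 0 < φ / ω := div_pos hφpos hω
    linarith
end
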